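/- For every n ∈ ℕ there exists a finite subset T_n of ℂⁿ such that for every orthonormal basis b₁, …, b_n of ℂⁿ there is a vector v ∈ T_n with | |⟨v, b_i⟩| − |⟨v, b_j⟩| | > 1 for all i ≠ j. -/

import Mathlib

open scoped ComplexInnerProductSpace

/-- For every `n` there is a finite subset `T` of `ℂⁿ` such that for every orthonormal basis
`b₁, …, b_n` of `ℂⁿ` some `v ∈ T` satisfies `| |⟨v,b_i⟩| − |⟨v,b_j⟩| | > 1` whenever `i ≠ j`. -/
theorem stmt5 (n : ℕ) :
    ∃ T : Finset (EuclideanSpace ℂ (Fin n)),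
      ∀ b : OrthonormalBasis (Fin n) ℂ (EuclideanSpace ℂ (Fin n)),
        ∃ v ∈ T, ∀ i j : Fin n, i ≠ j →
          1 < |‖(inner ℂ v (b i) : ℂ)‖ - ‖(inner ℂ v (b j) : ℂ)‖| := by
  set E := EuclideanSpace ℂ (Fin n)
  set R : ℝ := 2 * (n + 1) * (n + 1) with hR
  obtain ⟨t, htfin, htcov⟩ :=
    Metric.totallyBounded_iff.mp (isCompact_closedBall (0 : E) R).totallyBounded
      (1/4) (by norm_num)
  refine ⟨htfin.toFinset, fun b => ?_⟩
  set l : Fin n → ℂ := fun i => ((2 * (i.1 + 1) : ℕ) : ℂ) with hl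
  set w : E := ∑ i, l i • b i with hw
  have hlk : ∀ k : Fin n, ‖l k‖ = 2 * ((k : ℝ) + 1) := by
    intro k
    rw [hl]
    rw [Complex.norm_natCast]
    push_cast
    ring
  have hwball : w ∈ Metric.closedBall (0 : E) R := by
    rw [Metric.mem_closedBall, dist_zero_right]
    calc ‖w‖ ≤ ∑ i, ‖l i • b i‖ := norm_sum_le _ _
      _ ≤ ∑ _i : Fin n, (2 * (n + 1) : ℝ) := by
          refine Finset.sum_le_sum fun i _ => ?_
          rw [norm_smul, b.orthonormal.1 i, mul_one, hlk i]
          have hi : (i : ℝ) ≤ n := by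
            have := i.2.le
            exact_mod_cast this
          linarith
      _ ≤ R := by
          simp only [Finset.sum_const, Finset.card_univ, Fintype.card_fin, nsmul_eq_mul, hR]
          nlinarith [n.cast_nonneg (α := ℝ)]
  obtain ⟨c, hct, hcw⟩ := Set.mem_iUnion₂.mp (htcov hwball)
  refine ⟨c, htfin.mem_toFinset.mpr hct, fun i j hij => ?_⟩
  have hinner : ∀ k : Fin n, (inner ℂ w (b k) : ℂ) = l k := by
    intro k
    rw [hw, b.orthonormal.inner_left_fintype]
    exact Complex.conj_natCast _
  have hdist : ‖c - w‖ < 1/4 := by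
    rw [← dist_eq_norm, dist_comm]
    exact Metric.mem_ball.mp hcw
  have hclose : ∀ k : Fin n, |‖(inner ℂ c (b k) : ℂ)‖ - 2 * ((k : ℝ) + 1)| ≤ 1/4 :=
    fun k =>
    calc |‖(inner ℂ c (b k) : ℂ)‖ - 2 * ((k : ℝ) + 1)|
        = |‖(inner ℂ c (b k) : ℂ)‖ - ‖l k‖| := by rw [hlk k]
      _ ≤ ‖(inner ℂ c (b k) : ℂ) - l k‖ := abs_norm_sub_norm_le _ _
      _ = ‖(inner ℂ (c - w) (b k) : ℂ)‖ := by rw [inner_sub_left, hinner k]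
      _ ≤ ‖c - w‖ * ‖b k‖ := norm_inner_le_norm _ _
      _ ≤ 1/4 := by rw [b.orthonormal.1 k, mul_one]; exact hdist.le
  have hij' : (3/2 : ℝ) ≤ |2 * ((i : ℝ) + 1) - 2 * ((j : ℝ) + 1)| - 1/2 := by
    have hne : (i : ℕ) ≠ (j : ℕ) := fun h => hij (Fin.val_injective h)
    have h1 : (1 : ℝ) ≤ |(i : ℝ) - (j : ℝ)| := by
      rcases lt_or_gt_of_ne hne with h | h
      · rw [abs_sub_comm, abs_of_pos]
        · have : (i : ℕ) + 1 ≤ (j : ℕ) := h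
          have : ((i : ℕ) : ℝ) + 1 ≤ ((j : ℕ) : ℝ) := by exact_mod_cast this
          linarith
        · have : ((i : ℕ) : ℝ) < ((j : ℕ) : ℝ) := by exact_mod_cast h
          linarith
      · rw [abs_of_pos]
        · have : (j : ℕ) + 1 ≤ (i : ℕ) := h
          have : ((j : ℕ) : ℝ) + 1 ≤ ((i : ℕ) : ℝ) := by exact_mod_cast this
          linarith
        · have : ((j : ℕ) : ℝ) < ((i : ℕ) : ℝ) := by exact_mod_cast h
          linarith
    have h2 : |2 * ((i : ℝ) + 1) - 2 * ((j : ℝ) + 1)| = 2 * |(i : ℝ) - (j : ℝ)| := by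
      rw [show 2 * ((i : ℝ) + 1) - 2 * ((j : ℝ) + 1) = 2 * ((i : ℝ) - (j : ℝ)) by ring,
        abs_mul, abs_two]
    rw [h2]; linarith
  have hi := hclose i
  have hj := hclose j
  rw [abs_le] at hi hj
  rw [lt_abs]
  rcases abs_cases (2 * ((i : ℝ) + 1) - 2 * ((j : ℝ) + 1)) with ⟨heq, _⟩ | ⟨heq, _⟩
  · left; rw [heq] at hij'; linarith [hi.1, hi.2, hj.1, hj.2]
  · right; rw [heq] at hij'; linarith [hi.1, hi.2, hj.1, hj.2]
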